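/- Let p be a prime and a : ℕ → ℂ with a(1) = 1, F(s) = Σ a(n) n^{-s} absolutely convergent for Re(s) > 1, and a(pk) arbitrary; suppose a(p^ℓ k) = a(p^ℓ)a(k) for p ∤ k and F_p(s) = Σ_{k≥0} a(p^k) p^{-ks} is nonvanishing for Re(s) > 1. Then for Re(s) > 1: Σ_{a=1}^{p-1} F(s, a/p) = (p − 1 − p·F_p(s)^{-1}) F(s), where F(s, α) = Σ_{n≥1} a(n) e^{-2πi nα} n^{-s}. -/

import Mathlib

open Complex

/-- The Dirichlet series `F(s) = ∑_{n≥1} a(n) n^{-s}`. -/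
noncomputable def dirSeries (a : ℕ → ℂ) (s : ℂ) : ℂ :=
  ∑' n : ℕ, a (n + 1) * ((n + 1 : ℕ) : ℂ) ^ (-s)

/-- The local factor `F_p(s) = ∑_{k≥0} a(p^k) p^{-ks}`. -/
noncomputable def localFactor (a : ℕ → ℂ) (p : ℕ) (s : ℂ) : ℂ :=
  ∑' k : ℕ, a (p ^ k) * ((p ^ k : ℕ) : ℂ) ^ (-s)

/-- The linear twist `F(s,α) = ∑_{n≥1} a(n) e(-nα) n^{-s}`. -/
noncomputable def linearTwist (a : ℕ → ℂ) (α : ℝ) (s : ℂ) : ℂ :=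
  ∑' n : ℕ, a (n + 1) *
    Complex.exp (-(2 * Real.pi * Complex.I * ((n + 1 : ℕ) : ℂ)) * (α : ℂ)) *
    ((n + 1 : ℕ) : ℂ) ^ (-s)

/-- Character-sum orthogonality: `∑_{j=1}^{p-1} e(-mj/p) = p-1` if `p ∣ m`, else `-1`. -/
lemma char_sum (p : ℕ) (hp : p.Prime) (m : ℕ) (hm : m ≠ 0) :
    ∑ j ∈ Finset.Icc 1 (p - 1),
      Complex.exp (-(2 * Real.pi * Complex.I * (m : ℂ)) * (((j : ℝ) / (p : ℝ)) : ℂ)) =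
      if p ∣ m then (p : ℂ) - 1 else -1 := by
  have hp0 : (p : ℂ) ≠ 0 := Nat.cast_ne_zero.mpr hp.pos.ne'
  have hπ : (2 * (Real.pi : ℂ) * I) ≠ 0 := by
    simp [Real.pi_ne_zero, I_ne_zero, Complex.ofReal_ne_zero]
  set w : ℂ := -(2 * Real.pi * I * m) / p with hw
  have hterm : ∀ j : ℕ,
      Complex.exp (-(2 * Real.pi * Complex.I * (m : ℂ)) * (((j : ℝ) / (p : ℝ)) : ℂ)) =
      Complex.exp w ^ j := by
    intro j
    rw [← Complex.exp_nat_mul]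
    congr 1
    rw [hw]; push_cast; ring
  have hzp : Complex.exp w ^ p = 1 := by
    rw [← Complex.exp_nat_mul]
    have h2 : (p : ℂ) * w = ((-(m : ℤ) : ℤ) : ℂ) * (2 * Real.pi * I) := by
      rw [hw]; push_cast; field_simp
    rw [h2, Complex.exp_int_mul_two_pi_mul_I]
  have hone : Complex.exp w = 1 ↔ p ∣ m := by
    rw [Complex.exp_eq_one_iff]
    constructor
    · rintro ⟨k, hk⟩
      rw [hw, div_eq_iff hp0] at hk
      have h3 : (2 * (Real.pi : ℂ) * I) * (-(m : ℂ)) = (2 * (Real.pi : ℂ) * I) * ((k : ℂ) * p) := by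
        linear_combination hk
      have h4 : -(m : ℂ) = (k : ℂ) * p := mul_left_cancel₀ hπ h3
      have h5 : (m : ℂ) = ((-k * p : ℤ) : ℂ) := by push_cast; linear_combination -h4
      have hZ : (m : ℤ) = -k * p := by exact_mod_cast h5
      have : (p : ℤ) ∣ (m : ℤ) := ⟨-k, by rw [hZ]; ring⟩
      exact_mod_cast this
    · rintro ⟨c, rfl⟩
      refine ⟨-(c : ℤ), ?_⟩
      rw [hw]; push_cast; field_simp
  have hins : Finset.range p = insert 0 (Finset.Icc 1 (p - 1)) := by
    ext j
    simp only [Finset.mem_range, Finset.mem_insert, Finset.mem_Icc]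
    have := hp.two_le
    omega
  have h0 : (0 : ℕ) ∉ Finset.Icc 1 (p - 1) := by simp
  have hsum : ∑ j ∈ Finset.range p, Complex.exp w ^ j
      = 1 + ∑ j ∈ Finset.Icc 1 (p - 1), Complex.exp w ^ j := by
    rw [hins, Finset.sum_insert h0, pow_zero]
  simp only [hterm]
  by_cases hd : p ∣ m
  · rw [if_pos hd]
    have h1 := hone.mpr hd
    have hv : ∑ j ∈ Finset.range p, Complex.exp w ^ j = (p : ℂ) := by
      simp [h1]
    rw [hv] at hsum
    linear_combination -hsum
  · rw [if_neg hd]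
    have h1 : Complex.exp w ≠ 1 := fun h => hd (hone.mp h)
    have hv : ∑ j ∈ Finset.range p, Complex.exp w ^ j = 0 := by
      rw [geom_sum_eq h1, hzp, sub_self, zero_div]
    rw [hv] at hsum
    linear_combination -hsum

lemma pow_mul_inj (p : ℕ) (hp : p.Prime) :
    Function.Injective (fun z : ℕ × {k : ℕ // ¬ p ∣ k} => p ^ z.1 * (z.2 : ℕ)) := by
  rintro ⟨ℓ₁, k₁, hk₁⟩ ⟨ℓ₂, k₂, hk₂⟩ h
  simp only at h
  have hk₁0 : k₁ ≠ 0 := fun h0 => hk₁ (h0 ▸ dvd_zero p)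
  have hk₂0 : k₂ ≠ 0 := fun h0 => hk₂ (h0 ▸ dvd_zero p)
  have hℓ : ℓ₁ = ℓ₂ := by
    have h1 := congrArg (fun n => n.factorization p) h
    simpa [Nat.factorization_mul (pow_ne_zero _ hp.pos.ne') hk₁0,
      Nat.factorization_mul (pow_ne_zero _ hp.pos.ne') hk₂0,
      hp.factorization_pow, Nat.factorization_eq_zero_of_not_dvd hk₁,
      Nat.factorization_eq_zero_of_not_dvd hk₂] using h1
  subst hℓ
  have hk : k₁ = k₂ := Nat.eq_of_mul_eq_mul_left (pow_pos hp.pos _) h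
  simp [hk]

/-- For a function splitting at the prime `p`,
`∑_{a=1}^{p-1} F(s, a/p) = (p − 1 − p·F_p(s)^{-1}) F(s)` for `Re(s) > 1`. -/
theorem sum_linear_twists_eq (p : ℕ) (hp : p.Prime) (a : ℕ → ℂ) (ha1 : a 1 = 1)
    (habs : ∀ σ : ℝ, 1 < σ → Summable fun n : ℕ => ‖a (n + 1)‖ / ((n + 1 : ℕ) : ℝ) ^ σ)
    (hmult : ∀ ℓ k : ℕ, ¬ p ∣ k → a (p ^ ℓ * k) = a (p ^ ℓ) * a k)
    (hFp : ∀ s : ℂ, 1 < s.re → localFactor a p s ≠ 0) :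
    ∀ s : ℂ, 1 < s.re →
      (∑ j ∈ Finset.Icc 1 (p - 1), linearTwist a ((j : ℝ) / (p : ℝ)) s) =
        ((p : ℂ) - 1 - (p : ℂ) * (localFactor a p s)⁻¹) * dirSeries a s := by
  intro s hs
  -- norm of the cpow factor
  have hnorm : ∀ m : ℕ, m ≠ 0 → ‖((m : ℕ) : ℂ) ^ (-s)‖ = ((m : ℝ) ^ s.re)⁻¹ := by
    intro m hm
    have h0 : (0 : ℝ) < (m : ℝ) := by exact_mod_cast Nat.pos_of_ne_zero hm
    rw [show ((m : ℕ) : ℂ) = (((m : ℝ)) : ℂ) from (Complex.ofReal_natCast m).symm,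
      Complex.norm_cpow_eq_rpow_re_of_pos h0, Complex.neg_re,
      Real.rpow_neg h0.le]
  -- the completed coefficient function
  set f : ℕ → ℂ := fun m => if m = 0 then 0 else a m * ((m : ℕ) : ℂ) ^ (-s) with hfdef
  have hf0 : f 0 = 0 := by simp [hfdef]
  have hfs : ∀ n : ℕ, f (n + 1) = a (n + 1) * ((n + 1 : ℕ) : ℂ) ^ (-s) := by
    intro n; simp [hfdef]
  -- summability
  have hSf1 : Summable fun n : ℕ => ‖f (n + 1)‖ := by
    refine (habs s.re hs).congr fun n => ?_
    rw [hfs, norm_mul, hnorm (n + 1) n.succ_ne_zero, div_eq_mul_inv]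
  have hSf : Summable fun m : ℕ => ‖f m‖ := (summable_nat_add_iff 1).mp hSf1
  have hSfC : Summable f := hSf.of_norm
  have hSind : Summable ({m : ℕ | p ∣ m}.indicator f) := hSfC.indicator _
  have hSindc : Summable ({m : ℕ | p ∣ m}ᶜ.indicator f) := hSfC.indicator _
  -- dirSeries and localFactor in terms of f
  have hF : dirSeries a s = ∑' m : ℕ, f m := by
    rw [dirSeries, Summable.tsum_eq_zero_add hSfC, hf0, zero_add]
    exact tsum_congr fun n => (hfs n).symm
  have hFploc : localFactor a p s = ∑' ℓ : ℕ, f (p ^ ℓ) := by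
    refine tsum_congr fun ℓ => ?_
    rw [hfdef]
    simp [pow_ne_zero, hp.pos.ne']
  -- Euler factorization at p
  have hmulf : ∀ (ℓ : ℕ) (k : {k : ℕ // ¬ p ∣ k}), f (p ^ ℓ * (k : ℕ)) = f (p ^ ℓ) * f k := by
    rintro ℓ ⟨k, hk⟩
    have hk0 : k ≠ 0 := fun h0 => hk (h0 ▸ dvd_zero p)
    have hpk0 : p ^ ℓ * k ≠ 0 := Nat.mul_ne_zero (pow_ne_zero _ hp.pos.ne') hk0
    simp only [hfdef, if_neg hpk0, if_neg (pow_ne_zero ℓ hp.pos.ne'), if_neg hk0]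
    rw [hmult ℓ k hk]
    have hcast : ((p ^ ℓ * k : ℕ) : ℂ) = (((p ^ ℓ : ℕ) : ℝ) : ℂ) * (((k : ℕ) : ℝ) : ℂ) := by
      push_cast; ring
    rw [hcast, mul_cpow_ofReal_nonneg (by positivity) (by positivity)]
    push_cast
    ring
  have hinj := pow_mul_inj p hp
  have hsupp : Function.support f ⊆
      Set.range (fun z : ℕ × {k : ℕ // ¬ p ∣ k} => p ^ z.1 * (z.2 : ℕ)) := by
    intro m hm
    have hm0 : m ≠ 0 := fun h0 => hm (by simp [h0, hf0])
    exact ⟨(m.factorization p, ⟨ordCompl[p] m, Nat.not_dvd_ordCompl hp hm0⟩),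
      Nat.ordProj_mul_ordCompl_eq_self m p⟩
  have h1n : Summable fun ℓ : ℕ => ‖f (p ^ ℓ)‖ :=
    hSf.comp_injective (Nat.pow_right_injective hp.two_le)
  have h2n : Summable fun k : {k : ℕ // ¬ p ∣ k} => ‖f k‖ := hSf.subtype _
  have hEuler : (∑' m : ℕ, f m) = localFactor a p s * ∑' k : {k : ℕ // ¬ p ∣ k}, f k := by
    rw [hFploc, tsum_mul_tsum_of_summable_norm h1n h2n]
    rw [tsum_congr fun z : ℕ × {k : ℕ // ¬ p ∣ k} => (hmulf z.1 z.2).symm]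
    exact (hinj.tsum_eq hsupp).symm
  -- the complement part equals `F_p⁻¹ * F`
  have hFpne := hFp s hs
  have hGval : (∑' k : {k : ℕ // ¬ p ∣ k}, f k) = (localFactor a p s)⁻¹ * ∑' m : ℕ, f m := by
    rw [hEuler, inv_mul_cancel_left₀ hFpne]
  -- splitting of F
  have hGind : (∑' k : {k : ℕ // ¬ p ∣ k}, f k) = ∑' m : ℕ, ({m : ℕ | p ∣ m}ᶜ.indicator f) m := by
    rw [show {m : ℕ | p ∣ m}ᶜ = {k : ℕ | ¬ p ∣ k} by ext k; simp]
    exact tsum_subtype _ f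
  have hsplit : (∑' m : ℕ, f m)
      = (∑' m : ℕ, ({m : ℕ | p ∣ m}.indicator f) m) + ∑' m : ℕ, ({m : ℕ | p ∣ m}ᶜ.indicator f) m := by
    rw [← Summable.tsum_add hSind hSindc]
    exact tsum_congr fun m =>
      (by simpa using (congrFun (Set.indicator_self_add_compl {m : ℕ | p ∣ m} f) m).symm)
  -- value of the divisible part
  have hDval : (∑' m : ℕ, ({m : ℕ | p ∣ m}.indicator f) m)
      = (∑' m : ℕ, f m) - (localFactor a p s)⁻¹ * ∑' m : ℕ, f m := by
    linear_combination -hsplit + hGind - hGval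
  -- the indicator sum shifted by one
  have hDshift : (∑' n : ℕ, ({m : ℕ | p ∣ m}.indicator f) (n + 1))
      = ∑' m : ℕ, ({m : ℕ | p ∣ m}.indicator f) m := by
    rw [Summable.tsum_eq_zero_add hSind]
    have : ({m : ℕ | p ∣ m}.indicator f) 0 = 0 := by
      simp [Set.indicator_apply, hf0]
    rw [this, zero_add]
  -- norm-1 property of the exponentials
  have hexp1 : ∀ (j n : ℕ),
      ‖Complex.exp (-(2 * Real.pi * Complex.I * ((n + 1 : ℕ) : ℂ)) * (((j : ℝ) / (p : ℝ) : ℝ) : ℂ))‖ = 1 := by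
    intro j n
    have he : -(2 * Real.pi * Complex.I * ((n + 1 : ℕ) : ℂ)) * (((j : ℝ) / (p : ℝ) : ℝ) : ℂ)
        = ((-(2 * Real.pi * ((n : ℝ) + 1) * ((j : ℝ) / (p : ℝ))) : ℝ) : ℂ) * I := by
      push_cast; ring
    rw [he, Complex.norm_exp_ofReal_mul_I]
  -- summability of each twist
  have hsummt : ∀ j : ℕ, Summable fun n : ℕ =>
      a (n + 1) * Complex.exp (-(2 * Real.pi * Complex.I * ((n + 1 : ℕ) : ℂ)) * (((j : ℝ) / (p : ℝ) : ℝ) : ℂ)) *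
      ((n + 1 : ℕ) : ℂ) ^ (-s) := by
    intro j
    refine Summable.of_norm (hSf1.congr fun n => ?_)
    rw [norm_mul, norm_mul, hexp1 j n, mul_one, ← norm_mul, ← hfs]
  -- swap the finite sum with the tsum
  have hswap : (∑ j ∈ Finset.Icc 1 (p - 1), linearTwist a ((j : ℝ) / (p : ℝ)) s)
      = ∑' n : ℕ, ∑ j ∈ Finset.Icc 1 (p - 1),
          a (n + 1) * Complex.exp (-(2 * Real.pi * Complex.I * ((n + 1 : ℕ) : ℂ)) * (((j : ℝ) / (p : ℝ) : ℝ) : ℂ)) *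
          ((n + 1 : ℕ) : ℂ) ^ (-s) := by
    rw [Summable.tsum_finsetSum fun j _ => hsummt j]
    rfl
  -- apply the character sum
  have hpoint : ∀ n : ℕ, (∑ j ∈ Finset.Icc 1 (p - 1),
      a (n + 1) * Complex.exp (-(2 * Real.pi * Complex.I * ((n + 1 : ℕ) : ℂ)) * (((j : ℝ) / (p : ℝ) : ℝ) : ℂ)) *
      ((n + 1 : ℕ) : ℂ) ^ (-s))
      = (p : ℂ) * ({m : ℕ | p ∣ m}.indicator f) (n + 1) - f (n + 1) := by
    intro n
    have hc := char_sum p hp (n + 1) n.succ_ne_zero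
    have hstep : (∑ j ∈ Finset.Icc 1 (p - 1),
        a (n + 1) * Complex.exp (-(2 * Real.pi * Complex.I * ((n + 1 : ℕ) : ℂ)) * (((j : ℝ) / (p : ℝ) : ℝ) : ℂ)) *
        ((n + 1 : ℕ) : ℂ) ^ (-s))
        = a (n + 1) * (if p ∣ (n + 1) then (p : ℂ) - 1 else -1) * ((n + 1 : ℕ) : ℂ) ^ (-s) := by
      rw [← hc, Finset.mul_sum, Finset.sum_mul]
      exact Finset.sum_congr rfl fun j _ => by norm_cast
    rw [hstep]
    by_cases hd : p ∣ (n + 1)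
    · rw [if_pos hd, Set.indicator_of_mem (show (n + 1) ∈ {m : ℕ | p ∣ m} from hd) f, hfs]
      ring
    · rw [if_neg hd, Set.indicator_of_notMem (show (n + 1) ∉ {m : ℕ | p ∣ m} from hd) f, hfs]
      ring
  -- put everything together
  have hLHS : (∑ j ∈ Finset.Icc 1 (p - 1), linearTwist a ((j : ℝ) / (p : ℝ)) s)
      = (p : ℂ) * (∑' m : ℕ, ({m : ℕ | p ∣ m}.indicator f) m) - ∑' m : ℕ, f m := by
    rw [hswap, tsum_congr hpoint, Summable.tsum_sub ((((summable_nat_add_iff 1).mpr hSind)).mul_left _)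
      ((summable_nat_add_iff 1).mpr hSfC), tsum_mul_left, hDshift,
      Summable.tsum_eq_zero_add hSfC, hf0, zero_add]
  rw [hLHS, hDval, hF]
  ring
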